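/- Let c > 0 and let f be a probability density on [0,c] satisfying 0 < f̲ ≤ f(v) ≤ f̄ for all v ∈ [0,c]. Then for every l ∈ [0,1] and every x ∈ (0,1]: (f̲·c)²·c·(x/2 − x²/3 + l·x/6) ≤ g_f(x,l) ≤ (f̄·c)²·c·(x/2 − x²/3 + l·x/6), where c·(x/2 − x²/3 + l·x/6) is the corresponding expected revenue under the uniform density 1/c on [0,c]. -/
import Mathlib


open MeasureTheory Set

lemma poly_int (c a b : ℝ) :
    (∫ v in (0:ℝ)..b, a * (v * (c - v * a))) = a * c * b ^ 2 / 2 - a ^ 2 * b ^ 3 / 3 := by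
  have h : ∀ v : ℝ, a * (v * (c - v * a)) = (a * c) * v - a ^ 2 * v ^ 2 := by
    intro v; ring
  simp only [h]
  rw [intervalIntegral.integral_sub, intervalIntegral.integral_const_mul,
    intervalIntegral.integral_const_mul, integral_id, integral_pow]
  · ring
  · exact ((continuous_const.mul continuous_id).intervalIntegrable _ _)
  · exact ((continuous_const.mul (continuous_pow 2)).intervalIntegrable _ _)

/-- Expected revenue `g_f(x,l)` of the two-bidder click-through auction with CTR pair
`(1,l)`, i.i.d. values with density `f` on `[0,c]`, and signal ratio `s₂/s₁ = x`. -/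
noncomputable def gRev (c : ℝ) (f : ℝ → ℝ) (x l : ℝ) : ℝ :=
  (∫ v in (0 : ℝ)..c, v * x * (∫ u in (v * x)..c, f u) * f v)
  + l * ∫ v in (0 : ℝ)..(c * x), (v / x) * (∫ u in (v / x)..c, f u) * f v

/-- For a density `f` on `[0,c]` with `0 < f̲ ≤ f ≤ f̄`, the expected revenue `g_f(x,l)`
is sandwiched between `(f̲c)²` and `(f̄c)²` times the expected revenue
`c·(x/2 − x²/3 + l·x/6)` under the uniform density `1/c` on `[0,c]`. -/
theorem gRev_sandwich (c : ℝ) (hc : 0 < c) (f : ℝ → ℝ) (flo fhi : ℝ) (hflo : 0 < flo)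
    (hf_lb : ∀ v ∈ Set.Icc (0 : ℝ) c, flo ≤ f v)
    (hf_ub : ∀ v ∈ Set.Icc (0 : ℝ) c, f v ≤ fhi)
    (hf_int : (∫ v in (0 : ℝ)..c, f v) = 1) :
    ∀ l ∈ Set.Icc (0 : ℝ) 1, ∀ x ∈ Set.Ioc (0 : ℝ) 1,
      (flo * c) ^ 2 * (c * (x / 2 - x ^ 2 / 3 + l * x / 6)) ≤ gRev c f x l
      ∧ gRev c f x l ≤ (fhi * c) ^ 2 * (c * (x / 2 - x ^ 2 / 3 + l * x / 6)) := by
  rintro l ⟨hl0, hl1⟩ x ⟨hx0, hx1⟩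
  have hfhi : 0 < fhi := lt_of_lt_of_le hflo
    ((hf_lb 0 ⟨le_rfl, hc.le⟩).trans (hf_ub 0 ⟨le_rfl, hc.le⟩))
  -- f is interval integrable on [0,c]
  have hfi : IntervalIntegrable f volume 0 c := by
    by_contra h
    rw [intervalIntegral.integral_undef h] at hf_int
    norm_num at hf_int
  set G : ℝ → ℝ := fun t => ∫ u in t..c, f u with hG
  -- bounds on G
  have hGlb : ∀ t ∈ Icc (0:ℝ) c, flo * (c - t) ≤ G t := by
    intro t ht
    have h1 : IntervalIntegrable f volume t c :=
      hfi.mono_set (by rw [uIcc_of_le ht.2, uIcc_of_le hc.le]; exact Icc_subset_Icc ht.1 le_rfl)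
    have := intervalIntegral.integral_mono_on ht.2
      (intervalIntegrable_const (c := flo)) h1
      (fun v hv => hf_lb v ⟨ht.1.trans hv.1, hv.2⟩)
    simpa [mul_comm, smul_eq_mul] using this
  have hGub : ∀ t ∈ Icc (0:ℝ) c, G t ≤ fhi * (c - t) := by
    intro t ht
    have h1 : IntervalIntegrable f volume t c :=
      hfi.mono_set (by rw [uIcc_of_le ht.2, uIcc_of_le hc.le]; exact Icc_subset_Icc ht.1 le_rfl)
    have := intervalIntegral.integral_mono_on ht.2 h1
      (intervalIntegrable_const (c := fhi))
      (fun v hv => hf_ub v ⟨ht.1.trans hv.1, hv.2⟩)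
    simpa [mul_comm, smul_eq_mul] using this
  -- continuity of G on [0,c]
  have hGcont : ContinuousOn G (Icc 0 c) := by
    have hint : IntegrableOn f (Set.uIcc 0 c) volume := by
      rw [uIcc_of_le hc.le, integrableOn_Icc_iff_integrableOn_Ioc]
      exact hfi.1
    have := intervalIntegral.continuousOn_primitive_interval_left (μ := volume) hint
    rwa [uIcc_of_le hc.le] at this
  have huIcc : Set.uIcc (0:ℝ) c = Icc 0 c := uIcc_of_le hc.le
  have hcx0 : (0:ℝ) ≤ c * x := mul_nonneg hc.le hx0.le
  have huIccx : Set.uIcc (0:ℝ) (c * x) = Icc 0 (c * x) := uIcc_of_le hcx0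
  have hcx_le : c * x ≤ c := by nlinarith
  -- first integrand integrable
  have hmap1 : ∀ v ∈ Icc (0:ℝ) c, v * x ∈ Icc (0:ℝ) c := by
    intro v hv
    exact ⟨mul_nonneg hv.1 hx0.le, by nlinarith [hv.1, hv.2]⟩
  have hphi1 : ContinuousOn (fun v : ℝ => v * x * G (v * x)) (Icc 0 c) := by
    exact ContinuousOn.mul (Continuous.continuousOn (by fun_prop))
      (hGcont.comp ((continuous_id.mul continuous_const).continuousOn) hmap1)
  have hI1 : IntervalIntegrable (fun v => v * x * G (v * x) * f v) volume 0 c :=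
    hfi.continuousOn_mul (by rw [huIcc]; exact hphi1)
  -- second integrand integrable
  have hfi2 : IntervalIntegrable f volume 0 (c * x) :=
    hfi.mono_set (by rw [huIcc, huIccx]; exact Icc_subset_Icc le_rfl hcx_le)
  have hmap2 : ∀ v ∈ Icc (0:ℝ) (c * x), v / x ∈ Icc (0:ℝ) c := by
    intro v hv
    exact ⟨div_nonneg hv.1 hx0.le, by rw [div_le_iff₀ hx0]; nlinarith [hv.2]⟩
  have hphi2 : ContinuousOn (fun v : ℝ => v / x * G (v / x)) (Icc 0 (c * x)) := by
    exact ContinuousOn.mul ((continuous_id.div_const x).continuousOn)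
      (hGcont.comp ((continuous_id.div_const x).continuousOn) hmap2)
  have hI2 : IntervalIntegrable (fun v => v / x * G (v / x) * f v) volume 0 (c * x) :=
    hfi2.continuousOn_mul (by rw [huIccx]; exact hphi2)
  -- pointwise bounds, first integrand
  have hLB1fun : ∀ v ∈ Icc (0:ℝ) c,
      flo * (x * (v * (c - v * x))) * flo ≤ v * x * G (v * x) * f v := by
    intro v hv
    have hvx := hmap1 v hv
    have h1 := hGlb _ hvx
    have h2 := hf_lb v hv
    have hnn : 0 ≤ v * x := mul_nonneg hv.1 hx0.le
    have hGl : 0 ≤ flo * (c - v * x) := mul_nonneg hflo.le (sub_nonneg.2 hvx.2)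
    have key : flo * (x * (v * (c - v * x))) = v * x * (flo * (c - v * x)) := by ring
    rw [key]
    exact mul_le_mul (mul_le_mul_of_nonneg_left h1 hnn) h2 hflo.le
      (mul_nonneg hnn (hGl.trans h1))
  have hUB1fun : ∀ v ∈ Icc (0:ℝ) c,
      v * x * G (v * x) * f v ≤ fhi * (x * (v * (c - v * x))) * fhi := by
    intro v hv
    have hvx := hmap1 v hv
    have h1 := hGub _ hvx
    have h2 := hf_ub v hv
    have hnn : 0 ≤ v * x := mul_nonneg hv.1 hx0.le
    have key : fhi * (x * (v * (c - v * x))) * fhi = v * x * (fhi * (c - v * x)) * fhi := by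
      ring
    rw [key]
    exact mul_le_mul (mul_le_mul_of_nonneg_left h1 hnn) h2
      (hflo.le.trans (hf_lb v hv))
      (mul_nonneg hnn (mul_nonneg hfhi.le (sub_nonneg.2 hvx.2)))
  -- pointwise bounds, second integrand
  have hLB2fun : ∀ v ∈ Icc (0:ℝ) (c * x),
      flo * ((1/x) * (v * (c - v * (1/x)))) * flo ≤ v / x * G (v / x) * f v := by
    intro v hv
    have hv' : v ∈ Icc (0:ℝ) c := ⟨hv.1, hv.2.trans hcx_le⟩
    have hvx := hmap2 v hv
    have h1 := hGlb _ hvx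
    have h2 := hf_lb v hv'
    have hnn : 0 ≤ v / x := div_nonneg hv.1 hx0.le
    have hGl : 0 ≤ flo * (c - v / x) := mul_nonneg hflo.le (sub_nonneg.2 hvx.2)
    have key : flo * ((1/x) * (v * (c - v * (1/x)))) = v / x * (flo * (c - v / x)) := by
      simp only [one_div, div_eq_mul_inv]; ring
    rw [key]
    exact mul_le_mul (mul_le_mul_of_nonneg_left h1 hnn) h2 hflo.le
      (mul_nonneg hnn (hGl.trans h1))
  have hUB2fun : ∀ v ∈ Icc (0:ℝ) (c * x),
      v / x * G (v / x) * f v ≤ fhi * ((1/x) * (v * (c - v * (1/x)))) * fhi := by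
    intro v hv
    have hv' : v ∈ Icc (0:ℝ) c := ⟨hv.1, hv.2.trans hcx_le⟩
    have hvx := hmap2 v hv
    have h1 := hGub _ hvx
    have h2 := hf_ub v hv'
    have hnn : 0 ≤ v / x := div_nonneg hv.1 hx0.le
    have key : fhi * ((1/x) * (v * (c - v * (1/x)))) * fhi
        = v / x * (fhi * (c - v / x)) * fhi := by
      simp only [one_div, div_eq_mul_inv]; ring
    rw [key]
    exact mul_le_mul (mul_le_mul_of_nonneg_left h1 hnn) h2
      (hflo.le.trans (hf_lb v hv'))
      (mul_nonneg hnn (mul_nonneg hfhi.le (sub_nonneg.2 hvx.2)))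
  -- bound functions are integrable (continuous)
  have hBint : ∀ k a b : ℝ, IntervalIntegrable
      (fun v : ℝ => k * (a * (v * (c - v * a))) * k) volume 0 b :=
    fun k a b => Continuous.intervalIntegrable (by fun_prop) 0 b
  -- integral bounds
  have hIneq1lb := intervalIntegral.integral_mono_on hc.le (hBint flo x c) hI1 hLB1fun
  have hIneq1ub := intervalIntegral.integral_mono_on hc.le hI1 (hBint fhi x c) hUB1fun
  have hIneq2lb := intervalIntegral.integral_mono_on hcx0 (hBint flo (1/x) (c*x)) hI2 hLB2fun
  have hIneq2ub := intervalIntegral.integral_mono_on hcx0 hI2 (hBint fhi (1/x) (c*x)) hUB2fun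
  -- compute bound integrals
  have hcomp : ∀ k a b : ℝ, (∫ v in (0:ℝ)..b, k * (a * (v * (c - v * a))) * k)
      = k * k * (a * c * b ^ 2 / 2 - a ^ 2 * b ^ 3 / 3) := by
    intro k a b
    have : ∀ v : ℝ, k * (a * (v * (c - v * a))) * k = (k * k) * (a * (v * (c - v * a))) := by
      intro v; ring
    simp only [this]
    rw [intervalIntegral.integral_const_mul, poly_int]
  rw [hcomp] at hIneq1lb hIneq1ub hIneq2lb hIneq2ub
  have hv1 : flo * flo * (x * c * c ^ 2 / 2 - x ^ 2 * c ^ 3 / 3)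
      = flo ^ 2 * (x * c ^ 3 / 2 - x ^ 2 * c ^ 3 / 3) := by ring
  have hv2 : flo * flo * ((1/x) * c * (c*x) ^ 2 / 2 - (1/x) ^ 2 * (c*x) ^ 3 / 3)
      = flo ^ 2 * (c ^ 3 * x / 6) := by
    have hxne : x ≠ 0 := hx0.ne'
    field_simp
    ring
  have hw2 : fhi * fhi * ((1/x) * c * (c*x) ^ 2 / 2 - (1/x) ^ 2 * (c*x) ^ 3 / 3)
      = fhi ^ 2 * (c ^ 3 * x / 6) := by
    have hxne : x ≠ 0 := hx0.ne'
    field_simp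
    ring
  rw [hv1] at hIneq1lb
  rw [hv2] at hIneq2lb
  rw [hw2] at hIneq2ub
  have hl2lb : l * (flo ^ 2 * (c ^ 3 * x / 6))
      ≤ l * ∫ v in (0:ℝ)..(c*x), v / x * G (v / x) * f v :=
    mul_le_mul_of_nonneg_left hIneq2lb hl0
  have hl2ub : l * ∫ v in (0:ℝ)..(c*x), v / x * G (v / x) * f v
      ≤ l * (fhi ^ 2 * (c ^ 3 * x / 6)) :=
    mul_le_mul_of_nonneg_left hIneq2ub hl0
  constructor
  · have heq : (flo * c) ^ 2 * (c * (x / 2 - x ^ 2 / 3 + l * x / 6))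
        = flo ^ 2 * (x * c ^ 3 / 2 - x ^ 2 * c ^ 3 / 3) + l * (flo ^ 2 * (c ^ 3 * x / 6)) := by
      ring
    rw [gRev, heq]
    exact add_le_add hIneq1lb hl2lb
  · have heq : (fhi * c) ^ 2 * (c * (x / 2 - x ^ 2 / 3 + l * x / 6))
        = fhi * fhi * (x * c * c ^ 2 / 2 - x ^ 2 * c ^ 3 / 3) + l * (fhi ^ 2 * (c ^ 3 * x / 6)) := by
      ring
    rw [gRev, heq]
    exact add_le_add hIneq1ub hl2ub
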